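/- For every integer x ≥ 1, under P^x the stopped process Y_{n∧τ₀}, where Y_n := (∏_{j=1}^{n} (1 − H(u(W_j))))·u(W_n) (with the convention that the empty product ∏_{j=1}^{0} equals 1), is a martingale with respect to the natural filtration generated by the random walk (W_n), and takes values in [0,1]. -/

import Mathlib

open Filter Real Set MeasureTheory ProbabilityTheory
open scoped ENNReal NNReal

/-- The random walk started at `x` with increments `ξ 1, ξ 2, …`:
`walk ξ x n ω = x + ξ₁(ω) + ⋯ + ξₙ(ω)`. -/
def walk {Ω : Type} (ξ : ℕ → Ω → ℤ) (x : ℤ) (n : ℕ) (ω : Ω) : ℤ :=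
  x + ∑ i ∈ Finset.Icc 1 n, ξ i ω

/-- `Hfun p s = (s - Q(s))/s` where `Q(s) = 1 - Σₖ pₖ (1-s)ᵏ`, with `Hfun p 0 = 0`. -/
noncomputable def Hfun (p : ℕ → ℝ) (s : ℝ) : ℝ :=
  if s = 0 then 0 else (s - (1 - ∑' k : ℕ, p k * (1 - s) ^ k)) / s

/-- The natural filtration generated by the random walk `walk ξ x`. -/
noncomputable def walkFiltration {Ω : Type} [m0 : MeasurableSpace Ω] (ξ : ℕ → Ω → ℤ)
    (hξmeas : ∀ n, Measurable (ξ n)) (x : ℤ) : Filtration ℕ m0 :=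
  Filtration.natural (fun n => walk ξ x n) (fun n => by
    have h : Measurable (walk ξ x n) := by
      unfold walk
      exact measurable_const.add (Finset.measurable_sum _ fun i _ => hξmeas i)
    exact h.stronglyMeasurable)

/-- Proposition 3 of Lalley–Shao: for every integer `x ≥ 1`, under
`P^x` the stopped process `Y_{n∧τ₀}`, where
`Yₙ = (∏_{j=1}^{n} (1 - H(u(W_j)))) · u(W_n)`, is a bounded martingale with respect
to the natural filtration of the random walk `(W_n)`, taking values in `[0,1]`.
Here `hitting (walk ξ x) (Set.Iic 0) 0 n ω` is `n ∧ τ₀(ω)` (with the convention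
that the walk is not stopped if it has not yet entered `(-∞,0]`). -/
lemma my_summable_of_tsum_eq_one {ι : Type*} {p : ι → ℝ} (h1 : ∑' k, p k = 1) : Summable p := by
  by_contra h
  rw [tsum_eq_zero_of_not_summable h] at h1
  norm_num at h1

lemma my_Q_bounds {p : ℕ → ℝ} (hp0 : ∀ k, 0 ≤ p k) (hp1 : ∑' k, p k = 1)
    (hpmean_summ : Summable (fun k : ℕ => (k : ℝ) * p k))
    (hpmean : ∑' k : ℕ, (k : ℝ) * p k = 1)
    {s : ℝ} (hs0 : 0 < s) (hs1 : s ≤ 1) :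
    1 - s ≤ ∑' k : ℕ, p k * (1 - s) ^ k ∧ (∑' k : ℕ, p k * (1 - s) ^ k) ≤ 1 := by
  have hsp : Summable p := my_summable_of_tsum_eq_one hp1
  have ht0 : (0:ℝ) ≤ 1 - s := by linarith
  have ht1 : (1:ℝ) - s ≤ 1 := by linarith
  have hle : ∀ k : ℕ, p k * (1 - s) ^ k ≤ p k := fun k =>
    mul_le_of_le_one_right (hp0 k) (pow_le_one₀ ht0 ht1)
  have hnn : ∀ k : ℕ, 0 ≤ p k * (1 - s) ^ k := fun k =>
    mul_nonneg (hp0 k) (pow_nonneg ht0 k)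
  have hsummT : Summable (fun k : ℕ => p k * (1 - s) ^ k) :=
    Summable.of_nonneg_of_le hnn hle hsp
  constructor
  · have hbern : ∀ k : ℕ, p k * (1 + (k : ℝ) * ((1 - s) - 1)) ≤ p k * (1 - s) ^ k := by
      intro k
      have h2 : (-2 : ℝ) ≤ (1 - s) - 1 := by linarith
      have := one_add_mul_le_pow h2 k
      have heq : (1 + ((1 - s) - 1)) = 1 - s := by ring
      rw [heq] at this
      exact mul_le_mul_of_nonneg_left (by rw [mul_comm (k:ℝ)] at this ⊢; exact this) (hp0 k)
    have heqf : (fun k : ℕ => p k * (1 + (k : ℝ) * ((1 - s) - 1)))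
        = fun k : ℕ => p k + ((1 - s) - 1) * ((k : ℝ) * p k) := by
      funext k; ring
    have hsumlow : Summable (fun k : ℕ => p k * (1 + (k : ℝ) * ((1 - s) - 1))) := by
      rw [heqf]; exact hsp.add (hpmean_summ.mul_left _)
    have htsumlow : (∑' k : ℕ, p k * (1 + (k : ℝ) * ((1 - s) - 1))) = 1 - s := by
      rw [heqf, Summable.tsum_add hsp (hpmean_summ.mul_left _), tsum_mul_left, hp1, hpmean]; ring
    calc (1:ℝ) - s = ∑' k : ℕ, p k * (1 + (k : ℝ) * ((1 - s) - 1)) := htsumlow.symm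
      _ ≤ ∑' k : ℕ, p k * (1 - s) ^ k := hsumlow.tsum_le_tsum hbern hsummT
  · calc (∑' k : ℕ, p k * (1 - s) ^ k) ≤ ∑' k, p k := hsummT.tsum_le_tsum hle hsp
      _ = 1 := hp1

theorem fk_stopped_process_martingale
    (p : ℕ → ℝ) (a : ℤ → ℝ) (σ2 η2 r : ℝ)
    -- offspring distribution: critical, variance σ2 ∈ (0,∞), finite third moment
    (hp0 : ∀ k, 0 ≤ p k)
    (hp1 : ∑' k, p k = 1)
    (hpmean_summ : Summable (fun k : ℕ => (k : ℝ) * p k))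
    (hpmean : ∑' k : ℕ, (k : ℝ) * p k = 1)
    (hp2summ : Summable (fun k : ℕ => (k : ℝ) ^ 2 * p k))
    (hσ2 : σ2 = (∑' k : ℕ, (k : ℝ) ^ 2 * p k) - 1)
    (hσ2pos : 0 < σ2)
    (hp3summ : Summable (fun k : ℕ => (k : ℝ) ^ 3 * p k))
    -- step distribution: mean 0, variance η2 ∈ (0,∞), finite r-th moment for some r > 4
    (ha0 : ∀ y, 0 ≤ a y)
    (ha1 : ∑' y, a y = 1)
    (hamean_summ : Summable (fun y : ℤ => (y : ℝ) * a y))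
    (hamean : ∑' y : ℤ, (y : ℝ) * a y = 0)
    (ha2summ : Summable (fun y : ℤ => (y : ℝ) ^ 2 * a y))
    (hη2 : η2 = ∑' y : ℤ, (y : ℝ) ^ 2 * a y)
    (hη2pos : 0 < η2)
    (hr : 4 < r)
    (harsumm : Summable (fun y : ℤ => |(y : ℝ)| ^ r * a y))
    -- the tail distribution function u(x) = P{M > x} of the maximal displacement
    (u : ℤ → ℝ)
    (humono : Antitone u)
    (huneg : ∀ x : ℤ, x ≤ 0 → u x = 1)
    (hupos : ∀ x : ℤ, 0 < u x)
    (hule : ∀ x : ℤ, u x ≤ 1)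
    (hulim : Tendsto u atTop (nhds 0))
    (huconv : ∀ x : ℤ, 1 ≤ x →
      u x = ∑' y : ℤ, a y * (1 - ∑' k : ℕ, p k * (1 - u (x - y)) ^ k))
    -- the random walk W with i.i.d. increments of law P{increment = y} = a(-y);
    -- walk ξ x n ω = x + ξ₁ + ⋯ + ξₙ is the walk started at x
    {Ω : Type} [MeasurableSpace Ω] (P : Measure Ω) [IsProbabilityMeasure P]
    (ξ : ℕ → Ω → ℤ)
    (hξmeas : ∀ n, Measurable (ξ n))
    (hξindep : iIndepFun ξ P)
    (hξlaw : ∀ (n : ℕ) (y : ℤ), P {ω | ξ n ω = y} = ENNReal.ofReal (a (-y)))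
    (x : ℤ) (hx : 1 ≤ x) :
    Martingale
      (fun (n : ℕ) (ω : Ω) =>
        (∏ j ∈ Finset.Icc 1 (hittingBtwn (walk ξ x) (Set.Iic 0) 0 n ω),
            (1 - Hfun p (u (walk ξ x j ω)))) *
          u (walk ξ x (hittingBtwn (walk ξ x) (Set.Iic 0) 0 n ω) ω))
      (walkFiltration ξ hξmeas x) P
    ∧ ∀ (n : ℕ) (ω : Ω),
        (∏ j ∈ Finset.Icc 1 (hittingBtwn (walk ξ x) (Set.Iic 0) 0 n ω),
            (1 - Hfun p (u (walk ξ x j ω)))) *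
          u (walk ξ x (hittingBtwn (walk ξ x) (Set.Iic 0) 0 n ω) ω) ∈ Set.Icc (0 : ℝ) 1 := by
  classical
  set W : ℕ → Ω → ℤ := walk ξ x with hW
  set ℱ : Filtration ℕ ‹MeasurableSpace Ω› := walkFiltration ξ hξmeas x with hℱ
  set F : ℕ → Ω → ℝ := fun (n : ℕ) (ω : Ω) =>
        (∏ j ∈ Finset.Icc 1 (hittingBtwn W (Set.Iic 0) 0 n ω),
            (1 - Hfun p (u (W j ω)))) *
          u (W (hittingBtwn W (Set.Iic 0) 0 n ω) ω) with hFdef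
  -- basic measurability
  have hmeasZR : ∀ g : ℤ → ℝ, Measurable g := fun g => measurable_of_countable g
  have hWmeas : ∀ j, Measurable (W j) := fun j =>
    measurable_const.add (Finset.measurable_sum _ fun i _ => hξmeas i)
  -- values of Q and the factors
  set Qb : ℤ → ℝ := fun w => 1 - ∑' k : ℕ, p k * (1 - u w) ^ k with hQbdef
  have hQbounds : ∀ w : ℤ, 0 ≤ Qb w ∧ Qb w ≤ u w := by
    intro w
    have h := my_Q_bounds hp0 hp1 hpmean_summ hpmean (hupos w) (hule w)
    constructor
    · simp only [hQbdef]; linarith [h.2]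
    · simp only [hQbdef]; linarith [h.1]
  have hQ01 : ∀ w : ℤ, 0 ≤ Qb w ∧ Qb w ≤ 1 := fun w =>
    ⟨(hQbounds w).1, le_trans (hQbounds w).2 (hule w)⟩
  have hfactor : ∀ w : ℤ, (1 - Hfun p (u w)) * u w = Qb w := by
    intro w
    rw [Hfun, if_neg (ne_of_gt (hupos w))]
    have h0 : u w ≠ 0 := ne_of_gt (hupos w)
    field_simp [hQbdef]
    simp only [hQbdef]; ring
  have hφ01 : ∀ w : ℤ, 0 ≤ 1 - Hfun p (u w) ∧ 1 - Hfun p (u w) ≤ 1 := by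
    intro w
    have h0 : (0:ℝ) < u w := hupos w
    have hq := hQbounds w
    have heq : 1 - Hfun p (u w) = Qb w / u w := by
      rw [eq_div_iff (ne_of_gt h0), hfactor w]
    rw [heq]
    exact ⟨div_nonneg hq.1 h0.le, (div_le_one h0).mpr hq.2⟩
  have hprod01 : ∀ (m : ℕ) (ω : Ω),
      0 ≤ ∏ j ∈ Finset.Icc 1 m, (1 - Hfun p (u (W j ω)))
      ∧ (∏ j ∈ Finset.Icc 1 m, (1 - Hfun p (u (W j ω)))) ≤ 1 := fun m ω =>
    ⟨Finset.prod_nonneg fun j _ => (hφ01 _).1,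
     Finset.prod_le_one (fun j _ => (hφ01 _).1) fun j _ => (hφ01 _).2⟩
  have hf01 : ∀ (n : ℕ) (ω : Ω), 0 ≤ F n ω ∧ F n ω ≤ 1 := by
    intro n ω
    have h1 := hprod01 (hittingBtwn W (Set.Iic 0) 0 n ω) ω
    have h2 := hupos (W (hittingBtwn W (Set.Iic 0) 0 n ω) ω)
    have h3 := hule (W (hittingBtwn W (Set.Iic 0) 0 n ω) ω)
    exact ⟨mul_nonneg h1.1 h2.le, mul_le_one₀ h1.2 h2.le h3⟩
  -- adaptedness
  have hAdW : StronglyAdapted ℱ W := Filtration.stronglyAdapted_natural _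
  have hstop : ∀ n : ℕ, IsStoppingTime ℱ (fun ω => ((hittingBtwn W (Set.Iic 0) 0 n ω : ℕ) : WithTop ℕ)) :=
    fun n => hittingBtwn_isStoppingTime (fun i => (hAdW i).measurable) measurableSet_Iic
  set Y : ℕ → Ω → ℝ := fun k ω =>
    (∏ j ∈ Finset.Icc 1 k, (1 - Hfun p (u (W j ω)))) * u (W k ω) with hYdef
  have hAdY : StronglyAdapted ℱ Y := by
    intro k
    have hWk : ∀ j, j ≤ k → Measurable[ℱ k] (W j) := fun j hj =>
      ((hAdW j).mono (ℱ.mono hj)).measurable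
    have hmeas : Measurable[ℱ k] (Y k) := by
      refine Measurable.mul ?_ ?_
      · exact Finset.measurable_prod _ fun j hj =>
          (hmeasZR (fun w => 1 - Hfun p (u w))).comp (hWk j (Finset.mem_Icc.mp hj).2)
      · exact (hmeasZR u).comp (hWk k le_rfl)
    exact hmeas.stronglyMeasurable
  have hprog : IsStronglyProgressive ℱ Y := hAdY.isStronglyProgressive_of_discrete
  have hAdF : StronglyAdapted ℱ F := fun n =>
    stronglyMeasurable_stoppedValue_of_le hprog (hstop n) fun ω => WithTop.coe_le_coe.mpr (hittingBtwn_le ω)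
  have hint_of_bdd : ∀ {v : Ω → ℝ}, Measurable v → (∀ ω, |v ω| ≤ 1) → Integrable v P := by
    intro v hv hb
    refine Integrable.mono' (integrable_const 1) hv.aestronglyMeasurable
      (ae_of_all _ fun ω => ?_)
    simpa [Real.norm_eq_abs] using hb ω
  have hFmeas : ∀ n, Measurable (F n) := fun n =>
    ((hAdF n).mono (ℱ.le n)).measurable
  have hFint : ∀ n, Integrable (F n) P := fun n =>
    hint_of_bdd (hFmeas n) fun ω => abs_le.mpr ⟨by linarith [(hf01 n ω).1], (hf01 n ω).2⟩
  refine ⟨martingale_of_setIntegral_eq_succ hAdF hFint ?_, fun n ω => ⟨(hf01 n ω).1, (hf01 n ω).2⟩⟩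
  intro n s hs
  have hssub : MeasurableSet s := ℱ.le n s hs
  set ξn : Ω → ℤ := ξ (n+1) with hξn
  set B : Set Ω := {ω | ∃ j ∈ Set.Icc 0 n, W j ω ∈ Set.Iic 0} with hBdef
  have hWFn : ∀ j, j ≤ n → Measurable[ℱ n] (W j) := fun j hj =>
    ((hAdW j).mono (ℱ.mono hj)).measurable
  have hIndep : Indep (ℱ n) (MeasurableSpace.comap ξn inferInstance) P := by
    set M : MeasurableSpace Ω := ⨆ i ∈ Set.Icc 1 n, MeasurableSpace.comap (ξ i) inferInstance
      with hMdef
    have hξM : ∀ i, i ∈ Set.Icc 1 n → Measurable[M] (ξ i) := fun i hi =>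
      Measurable.of_comap_le
        (le_iSup₂ (f := fun i (_ : i ∈ Set.Icc 1 n) =>
          MeasurableSpace.comap (ξ i) inferInstance) i hi)
    have hWM : ∀ j, j ≤ n → Measurable[M] (W j) := by
      intro j hj
      have h1 : Measurable[M] fun ω => ∑ i ∈ Finset.Icc 1 j, ξ i ω :=
        Finset.measurable_sum _ fun i hi =>
          hξM i ⟨(Finset.mem_Icc.mp hi).1, le_trans (Finset.mem_Icc.mp hi).2 hj⟩
      exact measurable_const.add h1
    have hle : ℱ n ≤ M := iSup₂_le fun j hj => (hWM j hj).comap_le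
    have hd : Disjoint (Set.Icc 1 n) ({n+1} : Set ℕ) := by
      rw [Set.disjoint_singleton_right]
      simp [Set.mem_Icc]
    have h := indep_iSup_of_disjoint (fun i => (hξmeas i).comap_le) hξindep.iIndep hd
    exact indep_of_indep_of_le_left (indep_of_indep_of_le_right h
      (le_iSup₂ (f := fun i (_ : i ∈ ({n+1} : Set ℕ)) =>
        MeasurableSpace.comap (ξ i) inferInstance) (n+1) rfl)) hle
  have hBFn : MeasurableSet[ℱ n] B := by
    have hBeq : B = ⋃ j ∈ Set.Icc 0 n, (W j) ⁻¹' (Set.Iic 0) := by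
      ext ω; simp [hBdef]
    rw [hBeq]
    exact MeasurableSet.biUnion (Set.to_countable _) fun j hj => hWFn j hj.2 measurableSet_Iic
  have hBm0 : MeasurableSet B := ℱ.le n _ hBFn
  have hit_mem : ∀ ω ∈ B, hittingBtwn W (Set.Iic 0) 0 (n+1) ω = hittingBtwn W (Set.Iic 0) 0 n ω :=
    fun ω hω => (hittingBtwn_eq_hittingBtwn_of_exists (Nat.le_succ n) hω).symm
  have hit_not : ∀ ω ∉ B, hittingBtwn W (Set.Iic 0) 0 n ω = n := by
    intro ω hω
    have hω' : ¬∃ j ∈ Set.Icc 0 n, W j ω ∈ Set.Iic 0 := hω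
    simp only [hittingBtwn]
    rw [if_neg hω']
  have hit_not_succ : ∀ ω ∉ B, hittingBtwn W (Set.Iic 0) 0 (n+1) ω = n + 1 := by
    intro ω hω
    by_cases hw : W (n+1) ω ∈ Set.Iic 0
    · have hex : ∃ j ∈ Set.Icc 0 (n+1), W j ω ∈ Set.Iic 0 := ⟨n+1, ⟨Nat.zero_le _, le_rfl⟩, hw⟩
      simp only [hittingBtwn]
      rw [if_pos hex]
      refine le_antisymm (csInf_le (OrderBot.bddBelow _) ⟨⟨Nat.zero_le _, le_rfl⟩, hw⟩) ?_
      refine le_csInf ⟨n+1, ⟨⟨Nat.zero_le _, le_rfl⟩, hw⟩⟩ fun b hb => ?_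
      by_contra hb'
      push_neg at hb'
      exact hω ⟨b, ⟨Nat.zero_le _, Nat.lt_succ_iff.mp hb'⟩, hb.2⟩
    · have hnex : ¬∃ j ∈ Set.Icc 0 (n+1), W j ω ∈ Set.Iic 0 := by
        rintro ⟨j, hj, hj'⟩
        rcases eq_or_lt_of_le hj.2 with hje | hlt
        · exact hw (hje ▸ hj')
        · exact hω ⟨j, ⟨Nat.zero_le _, Nat.lt_succ_iff.mp hlt⟩, hj'⟩
      simp only [hittingBtwn]
      rw [if_neg hnex]
  have hWsucc : ∀ ω, W (n+1) ω = W n ω + ξn ω := by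
    intro ω
    show walk ξ x (n+1) ω = walk ξ x n ω + ξ (n+1) ω
    unfold walk
    rw [Finset.sum_Icc_succ_top (Nat.succ_le_succ (Nat.zero_le n))]
    ring
  set A : Ω → ℝ := fun ω => ∏ j ∈ Finset.Icc 1 n, (1 - Hfun p (u (W j ω))) with hAdef
  have hAFn : Measurable[ℱ n] A :=
    Finset.measurable_prod _ fun j hj =>
      (hmeasZR (fun w => 1 - Hfun p (u w))).comp (hWFn j (Finset.mem_Icc.mp hj).2)
  have hA01 : ∀ ω, 0 ≤ A ω ∧ A ω ≤ 1 := fun ω => hprod01 n ω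
  set g : Ω → ℝ := (s ∩ Bᶜ).indicator A with hgdef
  have hgFn : Measurable[ℱ n] g := hAFn.indicator (hs.inter hBFn.compl)
  have hgm0 : Measurable g := hgFn.mono (ℱ.le n) le_rfl
  have hg01 : ∀ ω, 0 ≤ g ω ∧ g ω ≤ 1 := by
    intro ω
    by_cases hωm : ω ∈ s ∩ Bᶜ
    · rw [hgdef]; simp only [Set.indicator_of_mem hωm]; exact hA01 ω
    · rw [hgdef]; simp only [Set.indicator_of_notMem hωm]; norm_num
  have hgQb_abs : ∀ (ω : Ω) (w : ℤ), |g ω * Qb w| ≤ 1 := by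
    intro ω w
    rw [abs_mul]
    have h1 := hg01 ω; have h2 := hQ01 w
    rw [abs_of_nonneg h1.1, abs_of_nonneg h2.1]
    exact mul_le_one₀ h1.2 h2.1 h2.2
  -- pointwise decompositions
  have hdecomp1 : ∀ ω, s.indicator (F (n+1)) ω =
      s.indicator (B.indicator (F n)) ω + g ω * Qb (W n ω + ξn ω) := by
    intro ω
    by_cases hωs : ω ∈ s
    · rw [Set.indicator_of_mem hωs, Set.indicator_of_mem hωs]
      by_cases hωB : ω ∈ B
      · rw [Set.indicator_of_mem hωB]
        have hg0 : g ω = 0 := by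
          rw [hgdef]; exact Set.indicator_of_notMem (fun h => h.2 hωB) A
        rw [hg0, zero_mul, add_zero]
        simp only [hFdef]
        rw [hit_mem ω hωB]
      · rw [Set.indicator_of_notMem hωB]
        have hgA : g ω = A ω := by
          rw [hgdef]; exact Set.indicator_of_mem (Set.mem_inter hωs hωB) A
        simp only [hFdef]
        rw [hit_not_succ ω hωB, hgA, zero_add]
        simp only [hAdef]
        rw [Finset.prod_Icc_succ_top (Nat.succ_le_succ (Nat.zero_le n)), ← hWsucc ω,
          mul_assoc, hfactor (W (n+1) ω)]
    · rw [Set.indicator_of_notMem hωs, Set.indicator_of_notMem hωs]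
      have hg0 : g ω = 0 := by
        rw [hgdef]; exact Set.indicator_of_notMem (fun h => hωs h.1) A
      rw [hg0, zero_mul, add_zero]
  have hdecomp2 : ∀ ω, s.indicator (F n) ω =
      s.indicator (B.indicator (F n)) ω + g ω * u (W n ω) := by
    intro ω
    by_cases hωs : ω ∈ s
    · rw [Set.indicator_of_mem hωs, Set.indicator_of_mem hωs]
      by_cases hωB : ω ∈ B
      · rw [Set.indicator_of_mem hωB]
        have hg0 : g ω = 0 := by
          rw [hgdef]; exact Set.indicator_of_notMem (fun h => h.2 hωB) A
        rw [hg0, zero_mul, add_zero]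
      · rw [Set.indicator_of_notMem hωB]
        have hgA : g ω = A ω := by
          rw [hgdef]; exact Set.indicator_of_mem (Set.mem_inter hωs hωB) A
        simp only [hFdef]
        rw [hit_not ω hωB, hgA, zero_add]
    · rw [Set.indicator_of_notMem hωs, Set.indicator_of_notMem hωs]
      have hg0 : g ω = 0 := by
        rw [hgdef]; exact Set.indicator_of_notMem (fun h => hωs h.1) A
      rw [hg0, zero_mul, add_zero]
  -- integrability
  have hint2 : Integrable (fun ω => g ω * Qb (W n ω + ξn ω)) P :=
    hint_of_bdd (hgm0.mul ((hmeasZR Qb).comp ((hWmeas n).add (hξmeas (n+1)))))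
      fun ω => hgQb_abs ω _
  have hint3 : Integrable (fun ω => g ω * u (W n ω)) P :=
    hint_of_bdd (hgm0.mul ((hmeasZR u).comp (hWmeas n))) fun ω => by
      rw [abs_mul, abs_of_nonneg (hg01 ω).1, abs_of_nonneg (hupos _).le]
      exact mul_le_one₀ (hg01 ω).2 (hupos _).le (hule _)
  have hint1 : Integrable (s.indicator (B.indicator (F n))) P := by
    refine hint_of_bdd (((hFmeas n).indicator hBm0).indicator hssub) fun ω => ?_
    by_cases h1 : ω ∈ s
    · rw [Set.indicator_of_mem h1]
      by_cases h2 : ω ∈ B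
      · rw [Set.indicator_of_mem h2]
        exact abs_le.mpr ⟨by linarith [(hf01 n ω).1], (hf01 n ω).2⟩
      · rw [Set.indicator_of_notMem h2]; norm_num
    · rw [Set.indicator_of_notMem h1]; norm_num
  -- the core identity via independence
  have hsumA : Summable a := my_summable_of_tsum_eq_one ha1
  have hsumAneg : Summable (fun z : ℤ => a (-z)) := (Equiv.neg ℤ).summable_iff.mpr hsumA
  have hPz : ∀ z : ℤ, P {ω | ξn ω = z} = ENNReal.ofReal (a (-z)) := fun z => hξlaw (n+1) z
  have hsetz : ∀ z : ℤ, MeasurableSet {ω | ξn ω = z} := fun z =>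
    hξmeas (n+1) (measurableSet_singleton z)
  set Fz : ℤ → Ω → ℝ := fun z ω => if ξn ω = z then g ω * Qb (W n ω + z) else 0 with hFzdef
  have hFzmeas : ∀ z, Measurable (Fz z) := fun z =>
    Measurable.ite (hsetz z)
      (hgm0.mul ((hmeasZR Qb).comp ((hWmeas n).add_const z))) measurable_const
  have hnorm_le : ∀ z ω, (‖Fz z ω‖₊ : ℝ≥0∞) ≤
      Set.indicator {ω | ξn ω = z} (fun _ => (1:ℝ≥0∞)) ω := by
    intro z ω
    by_cases hω : ξn ω = z
    · have hmem : ω ∈ {ω | ξn ω = z} := hω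
      rw [Set.indicator_of_mem hmem]
      simp only [hFzdef, if_pos hω]
      rw [← enorm_eq_nnnorm, ← ofReal_norm]
      calc ENNReal.ofReal ‖g ω * Qb (W n ω + z)‖ ≤ ENNReal.ofReal 1 :=
            ENNReal.ofReal_le_ofReal (by rw [Real.norm_eq_abs]; exact hgQb_abs ω _)
        _ = 1 := ENNReal.ofReal_one
    · have hmem : ω ∉ {ω | ξn ω = z} := hω
      rw [Set.indicator_of_notMem hmem]
      simp only [hFzdef, if_neg hω, nnnorm_zero, ENNReal.coe_zero, le_refl]
  have hlin : ∀ z, ∫⁻ ω, (‖Fz z ω‖₊ : ℝ≥0∞) ∂P ≤ ENNReal.ofReal (a (-z)) := by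
    intro z
    calc ∫⁻ ω, (‖Fz z ω‖₊ : ℝ≥0∞) ∂P
        ≤ ∫⁻ ω, Set.indicator {ω | ξn ω = z} (fun _ => (1:ℝ≥0∞)) ω ∂P :=
          lintegral_mono fun ω => hnorm_le z ω
      _ = P {ω | ξn ω = z} := by
          rw [lintegral_indicator (hsetz z)]
          simp
      _ = ENNReal.ofReal (a (-z)) := hPz z
  have htot : (∑' z : ℤ, ENNReal.ofReal (a (-z))) ≠ ⊤ := by
    rw [← ENNReal.ofReal_tsum_of_nonneg (fun z => ha0 _) hsumAneg]
    exact ENNReal.ofReal_ne_top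
  have hlintsum : (∑' z : ℤ, ∫⁻ ω, (‖Fz z ω‖₊ : ℝ≥0∞) ∂P) ≠ ⊤ :=
    ne_top_of_le_ne_top htot (ENNReal.tsum_le_tsum hlin)
  have hstep1 : (fun ω => g ω * Qb (W n ω + ξn ω)) = fun ω => ∑' z : ℤ, Fz z ω := by
    funext ω
    have h := tsum_eq_single (L := SummationFilter.unconditional ℤ) (f := fun z => Fz z ω) (ξn ω) (fun b hb => by
      simp only [hFzdef]
      rw [if_neg]
      exact fun hc => hb hc.symm)
    rw [h]
    simp [hFzdef]
  have hstep2 : ∫ ω, (∑' z : ℤ, Fz z ω) ∂P = ∑' z : ℤ, ∫ ω, Fz z ω ∂P :=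
    integral_tsum (fun z => (hFzmeas z).aestronglyMeasurable) hlintsum
  have hstep3 : ∀ z : ℤ, ∫ ω, Fz z ω ∂P = a (-z) * ∫ ω, g ω * Qb (W n ω + z) ∂P := by
    intro z
    have hXmeas : Measurable[ℱ n] fun ω => g ω * Qb (W n ω + z) :=
      hgFn.mul ((hmeasZR Qb).comp (Measurable.add_const (hWFn n le_rfl) z))
    have hYmeasc : Measurable[MeasurableSpace.comap ξn inferInstance]
        fun ω => (if ξn ω = z then (1:ℝ) else 0) := by
      have h1 : Measurable[MeasurableSpace.comap ξn inferInstance] ξn :=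
        Measurable.of_comap_le le_rfl
      exact (hmeasZR fun t : ℤ => if t = z then (1:ℝ) else 0).comp h1
    have hXY : IndepFun (fun ω => g ω * Qb (W n ω + z))
        (fun ω => (if ξn ω = z then (1:ℝ) else 0)) P := by
      rw [IndepFun_iff_Indep]
      exact indep_of_indep_of_le_right
        (indep_of_indep_of_le_left hIndep hXmeas.comap_le)
        hYmeasc.comap_le
    have hXint : Integrable (fun ω => g ω * Qb (W n ω + z)) P :=
      hint_of_bdd (hgm0.mul ((hmeasZR Qb).comp ((hWmeas n).add_const z)))
        fun ω => hgQb_abs ω _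
    have hYint : Integrable (fun ω => (if ξn ω = z then (1:ℝ) else 0)) P := by
      refine hint_of_bdd (Measurable.ite (hsetz z) measurable_const measurable_const)
        fun ω => ?_
      by_cases hω : ξn ω = z <;> simp [hω]
    have hprodeq : Fz z = fun ω => (g ω * Qb (W n ω + z)) * (if ξn ω = z then (1:ℝ) else 0) := by
      funext ω
      by_cases hω : ξn ω = z <;> simp [hFzdef, hω]
    have hmul : ∫ ω, (g ω * Qb (W n ω + z)) * (if ξn ω = z then (1:ℝ) else 0) ∂P
        = (∫ ω, g ω * Qb (W n ω + z) ∂P) * ∫ ω, (if ξn ω = z then (1:ℝ) else 0) ∂P :=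
      hXY.integral_mul_eq_mul_integral hXint.aestronglyMeasurable hYint.aestronglyMeasurable
    rw [hprodeq, hmul]
    have hYval : ∫ ω, (if ξn ω = z then (1:ℝ) else 0) ∂P = a (-z) := by
      have heq : (fun ω => (if ξn ω = z then (1:ℝ) else 0))
          = Set.indicator {ω | ξn ω = z} (fun _ => (1:ℝ)) := by
        funext ω
        by_cases hω : ξn ω = z
        · rw [if_pos hω, Set.indicator_of_mem (show ω ∈ {ω | ξn ω = z} from hω)]
        · rw [if_neg hω, Set.indicator_of_notMem (show ω ∉ {ω | ξn ω = z} from hω)]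
      rw [heq, integral_indicator_const (1:ℝ) (hsetz z), measureReal_def, hPz z, smul_eq_mul, mul_one,
        ENNReal.toReal_ofReal (ha0 _)]
    rw [hYval]
    ring
  set Gz : ℤ → Ω → ℝ := fun z ω => a (-z) * (g ω * Qb (W n ω + z)) with hGzdef
  have hGzmeas : ∀ z, Measurable (Gz z) := fun z =>
    measurable_const.mul (hgm0.mul ((hmeasZR Qb).comp ((hWmeas n).add_const z)))
  have hGnorm : ∀ z ω, (‖Gz z ω‖₊ : ℝ≥0∞) ≤ ENNReal.ofReal (a (-z)) := by
    intro z ω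
    rw [← enorm_eq_nnnorm, ← ofReal_norm]
    refine ENNReal.ofReal_le_ofReal ?_
    simp only [hGzdef]
    rw [Real.norm_eq_abs, abs_mul, abs_of_nonneg (ha0 _)]
    calc a (-z) * |g ω * Qb (W n ω + z)| ≤ a (-z) * 1 :=
          mul_le_mul_of_nonneg_left (hgQb_abs ω _) (ha0 _)
      _ = a (-z) := mul_one _
  have hGlin : ∀ z, ∫⁻ ω, (‖Gz z ω‖₊ : ℝ≥0∞) ∂P ≤ ENNReal.ofReal (a (-z)) := by
    intro z
    calc ∫⁻ ω, (‖Gz z ω‖₊ : ℝ≥0∞) ∂P ≤ ∫⁻ _, ENNReal.ofReal (a (-z)) ∂P :=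
          lintegral_mono fun ω => hGnorm z ω
      _ = ENNReal.ofReal (a (-z)) := by rw [lintegral_const, measure_univ, mul_one]
  have hGsum : (∑' z : ℤ, ∫⁻ ω, (‖Gz z ω‖₊ : ℝ≥0∞) ∂P) ≠ ⊤ :=
    ne_top_of_le_ne_top htot (ENNReal.tsum_le_tsum hGlin)
  have hstep4 : ∫ ω, (∑' z : ℤ, Gz z ω) ∂P = ∑' z : ℤ, ∫ ω, Gz z ω ∂P :=
    integral_tsum (fun z => (hGzmeas z).aestronglyMeasurable) hGsum
  have hGint_eq : ∀ z : ℤ, ∫ ω, Gz z ω ∂P = a (-z) * ∫ ω, g ω * Qb (W n ω + z) ∂P := fun z =>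
    integral_const_mul _ _
  have hstep5 : ∀ ω, (∑' z : ℤ, Gz z ω) = g ω * u (W n ω) := by
    intro ω
    have hre : ∀ z : ℤ, Gz z ω = g ω * (a (-z) * Qb (W n ω + z)) := fun z => by
      simp only [hGzdef]; ring
    rw [tsum_congr hre, tsum_mul_left]
    by_cases hg0 : g ω = 0
    · rw [hg0, zero_mul, zero_mul]
    · have hmem : ω ∈ s ∩ Bᶜ := by
        by_contra hmem
        exact hg0 (by rw [hgdef]; exact Set.indicator_of_notMem hmem A)
      have hWpos : 1 ≤ W n ω := by
        have hnB : ω ∉ B := hmem.2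
        have hWn : ¬ W n ω ≤ 0 := fun hle => hnB ⟨n, ⟨Nat.zero_le _, le_rfl⟩, hle⟩
        omega
      congr 1
      have hre2 : (fun z : ℤ => a (-z) * Qb (W n ω + z))
          = fun z : ℤ => (fun y : ℤ => a y * Qb (W n ω - y)) ((Equiv.neg ℤ) z) := by
        funext z
        simp only [Equiv.neg_apply]
        rw [sub_neg_eq_add]
      rw [hre2, Equiv.tsum_eq (Equiv.neg ℤ) (fun y : ℤ => a y * Qb (W n ω - y))]
      simp only [hQbdef]
      exact (huconv (W n ω) hWpos).symm
  have hcore : ∫ ω, g ω * Qb (W n ω + ξn ω) ∂P = ∫ ω, g ω * u (W n ω) ∂P := by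
    calc ∫ ω, g ω * Qb (W n ω + ξn ω) ∂P = ∫ ω, (∑' z : ℤ, Fz z ω) ∂P := by rw [hstep1]
      _ = ∑' z : ℤ, ∫ ω, Fz z ω ∂P := hstep2
      _ = ∑' z : ℤ, a (-z) * ∫ ω, g ω * Qb (W n ω + z) ∂P := tsum_congr hstep3
      _ = ∑' z : ℤ, ∫ ω, Gz z ω ∂P := (tsum_congr hGint_eq).symm
      _ = ∫ ω, (∑' z : ℤ, Gz z ω) ∂P := hstep4.symm
      _ = ∫ ω, g ω * u (W n ω) ∂P := integral_congr_ae (ae_of_all _ hstep5)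
  rw [← integral_indicator hssub, ← integral_indicator hssub]
  calc ∫ ω, s.indicator (F n) ω ∂P
      = ∫ ω, (s.indicator (B.indicator (F n)) ω + g ω * u (W n ω)) ∂P :=
        integral_congr_ae (ae_of_all _ hdecomp2)
    _ = (∫ ω, s.indicator (B.indicator (F n)) ω ∂P) + ∫ ω, g ω * u (W n ω) ∂P :=
        integral_add hint1 hint3
    _ = (∫ ω, s.indicator (B.indicator (F n)) ω ∂P) + ∫ ω, g ω * Qb (W n ω + ξn ω) ∂P := by
        rw [hcore]
    _ = ∫ ω, (s.indicator (B.indicator (F n)) ω + g ω * Qb (W n ω + ξn ω)) ∂P :=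
        (integral_add hint1 hint2).symm
    _ = ∫ ω, s.indicator (F (n+1)) ω ∂P :=
        (integral_congr_ae (ae_of_all _ hdecomp1)).symm
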